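/- Fix 1<k<ω and let T be a complete first-order theory. If a partitioned formula φ(x;y) is PM^(k+1) in T, then the formula ψ(x; y_0,…,y_k) := ⋀_{i<k+1} φ(x;y_i) is PM^(k) in T. -/

import Mathlib

open FirstOrder Language Set

universe u v w

/-- A partitioned formula `φ(x;y)` (object variables `α`, parameter variables `β`)
exhibits the pattern `(C, I)` (indexed by `S`) in the theory `T`. -/
def ExhibitsPattern {L : FirstOrder.Language.{u, v}} (T : L.Theory) {α β S : Type*}
    (φ : L.Formula (α ⊕ β)) (C I : Set (Set S × Set S)) : Prop :=
  ∃ (M : Theory.ModelType.{u, v, w} T) (b : S → β → M),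
    (∀ p ∈ C, ∃ a : α → M,
      (∀ i ∈ p.1, φ.Realize (Sum.elim a (b i))) ∧
      (∀ j ∈ p.2, ¬ φ.Realize (Sum.elim a (b j)))) ∧
    (∀ p ∈ I, ¬ ∃ a : α → M,
      (∀ i ∈ p.1, φ.Realize (Sum.elim a (b i))) ∧
      (∀ j ∈ p.2, ¬ φ.Realize (Sum.elim a (b j))))

/-- `(C, I)` is a pattern: the condition `(∅, ∅)` is excluded. -/
def IsPattern {S : Type*} (C I : Set (Set S × Set S)) : Prop :=
  (∅, ∅) ∉ C ∧ (∅, ∅) ∉ I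

/-- A pattern is exhibitable if some partitioned formula of some complete
first-order theory exhibits it. -/
def Exhibitable {S : Type*} (C I : Set (Set S × Set S)) : Prop :=
  ∃ (L : FirstOrder.Language.{0, 0}) (T : L.Theory) (_ : T.IsComplete) (α β : Type)
    (φ : L.Formula (α ⊕ β)), ExhibitsPattern.{0, 0, 0} T φ C I

/-- `(C, I)` is a positive pattern: every condition has the form `(X, ∅)` with `X` nonempty. -/
def IsPositivePattern {S : Type*} (C I : Set (Set S × Set S)) : Prop :=
  ∀ p ∈ C ∪ I, p.1 ≠ (∅ : Set S) ∧ p.2 = (∅ : Set S)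

/-- A positive pattern `(C, I)` is reasonable: no inconsistency condition is contained in a
consistency condition. -/
def IsReasonablePositive {S : Type*} (C I : Set (Set S × Set S)) : Prop :=
  ∀ p ∈ I, ∀ q ∈ C, ¬ p.1 ⊆ q.1

/-- `φ(x;y)` is `PM^(k)` in `T`: it exhibits every reasonable positive pattern all of whose
inconsistency conditions have size `k`. -/
def IsPMk (k : ℕ) {L : FirstOrder.Language.{u, v}} (T : L.Theory) {α β : Type*}
    (φ : L.Formula (α ⊕ β)) : Prop :=
  ∀ (n : ℕ) (C I : Set (Set (Fin n) × Set (Fin n))),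
    IsPositivePattern C I → IsReasonablePositive C I →
    (∀ p ∈ I, p.1.ncard = k) →
      ExhibitsPattern.{u, v, w} T φ C I

/-- The conjunction of a finite set of formulas, as `BoundedFormula.iInf` was defined in the
older Mathlib (indexed by a `Finset`). -/
noncomputable def finsetIInf {L : FirstOrder.Language.{u, v}} {α β : Type*} {n : ℕ}
    (s : Finset β) (f : β → L.BoundedFormula α n) : L.BoundedFormula α n :=
  (s.toList.map f).foldr (· ⊓ ·) ⊤

theorem realize_finsetIInf {L : FirstOrder.Language.{u, v}} {α β : Type*} {n : ℕ}
    {M : Type*} [L.Structure M] (s : Finset β) (f : β → L.BoundedFormula α n)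
    (v : α → M) (xs : Fin n → M) :
    (finsetIInf s f).Realize v xs ↔ ∀ b ∈ s, (f b).Realize v xs := by
  have key : ∀ l : List β,
      (((l.map f).foldr (· ⊓ ·) ⊤ : L.BoundedFormula α n)).Realize v xs ↔
        ∀ b ∈ l, (f b).Realize v xs := by
    intro l
    induction l with
    | nil => simp
    | cons a l ih => simp [ih]
  simpa [finsetIInf] using key s.toList

/-- for `1 < k < ω`, if `φ(x;y)` is `PM^(k+1)` in the complete theory `T`, then
the partitioned formula `ψ(x; y₀ … y_k) = ⋀_{i<k+1} φ(x; y_i)` is `PM^(k)` in `T`. -/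
theorem PMk_succ_implies_PMk_of_conjunction
    (k : ℕ) (hk : 1 < k)
    {L : FirstOrder.Language.{u, v}} (T : L.Theory) (hT : T.IsComplete)
    {α β : Type*} (φ : L.Formula (α ⊕ β))
    (hφ : IsPMk.{u, v, w} (k + 1) T φ) :
    IsPMk.{u, v, w} k T
      (finsetIInf (Finset.univ : Finset (Fin (k + 1)))
        (fun i => φ.relabel (Sum.map id (Prod.mk i) :
          α ⊕ β → α ⊕ (Fin (k + 1) × β)))) := by
  classical
  intro n C I hpos hres hsize
  set e : Fin n × Fin (k + 1) ≃ Fin (n * (k + 1)) := finProdFinEquiv with he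
  -- two distinct elements of Fin (k+1)
  have hk1 : 1 < k + 1 := by omega
  let j0 : Fin (k + 1) := ⟨0, by omega⟩
  let j1 : Fin (k + 1) := ⟨1, by omega⟩
  have hj01 : j0 ≠ j1 := by
    intro h
    have := congrArg Fin.val h
    simp [j0, j1] at this
  -- the auxiliary pattern for φ
  let C' : Set (Set (Fin (n * (k + 1))) × Set (Fin (n * (k + 1)))) :=
    {p | ∃ q ∈ C, p = (e '' (q.1 ×ˢ Set.univ), ∅)}
  let I' : Set (Set (Fin (n * (k + 1))) × Set (Fin (n * (k + 1)))) :=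
    {p | ∃ q ∈ I, ∃ W : Set (Fin n × Fin (k + 1)),
      W ⊆ q.1 ×ˢ Set.univ ∧ Prod.fst '' W = q.1 ∧ W.ncard = k + 1 ∧ p = (e '' W, ∅)}
  -- existence of a witness W for each inconsistency condition
  have hexW : ∀ q ∈ I, ∃ W : Set (Fin n × Fin (k + 1)),
      W ⊆ q.1 ×ˢ Set.univ ∧ Prod.fst '' W = q.1 ∧ W.ncard = k + 1 := by
    intro q hq
    have hqcard : q.1.ncard = k := hsize q hq
    have hqne : q.1.Nonempty := by
      apply Set.nonempty_of_ncard_ne_zero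
      omega
    obtain ⟨z, hz⟩ := hqne
    refine ⟨insert (z, j1) ((fun i => (i, j0)) '' q.1), ?_, ?_, ?_⟩
    · rintro w hw
      rcases hw with rfl | ⟨i, hi, rfl⟩
      · exact Set.mk_mem_prod hz (Set.mem_univ _)
      · exact Set.mk_mem_prod hi (Set.mem_univ _)
    · rw [Set.image_insert_eq, ← Set.image_comp]
      have : (Prod.fst ∘ fun i : Fin n => (i, j0)) = id := rfl
      rw [this, Set.image_id]
      exact Set.insert_eq_self.2 hz
    · have hinj : Function.Injective (fun i : Fin n => (i, j0)) := by
        intro a b h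
        exact congrArg Prod.fst h
      have hnot : (z, j1) ∉ (fun i : Fin n => (i, j0)) '' q.1 := by
        rintro ⟨i, _, h⟩
        have h2 := congrArg Prod.snd h
        simp only at h2
        exact hj01 h2
      rw [Set.ncard_insert_of_notMem hnot (Set.toFinite _),
        Set.ncard_image_of_injective _ hinj, hqcard]
  -- positivity of the auxiliary pattern
  have hpos' : IsPositivePattern C' I' := by
    rintro p (hp | hp)
    · obtain ⟨q, hq, rfl⟩ := hp
      obtain ⟨hne, -⟩ := hpos q (Set.mem_union_left _ hq)
      obtain ⟨y, hy⟩ := Set.nonempty_iff_ne_empty.2 hne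
      exact ⟨Set.nonempty_iff_ne_empty.1
        ⟨e (y, j0), Set.mem_image_of_mem _ (Set.mk_mem_prod hy (Set.mem_univ _))⟩, rfl⟩
    · obtain ⟨q, hq, W, hWsub, hWfst, hWcard, rfl⟩ := hp
      have hWne : W.Nonempty := by
        apply Set.nonempty_of_ncard_ne_zero
        omega
      exact ⟨Set.nonempty_iff_ne_empty.1 (hWne.image e), rfl⟩
  -- reasonableness of the auxiliary pattern
  have hres' : IsReasonablePositive C' I' := by
    rintro p hp q hq hsub
    obtain ⟨qI, hqI, W, hWsub, hWfst, hWcard, rfl⟩ := hp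
    obtain ⟨qC, hqC, rfl⟩ := hq
    have hWsub' : W ⊆ qC.1 ×ˢ Set.univ :=
      (Set.image_subset_image_iff e.injective).1 hsub
    refine hres qI hqI qC hqC ?_
    intro z hz
    rw [← hWfst] at hz
    obtain ⟨w, hw, rfl⟩ := hz
    exact (hWsub' hw).1
  -- sizes
  have hsize' : ∀ p ∈ I', p.1.ncard = k + 1 := by
    rintro p ⟨q, hq, W, hWsub, hWfst, hWcard, rfl⟩
    simpa [Set.ncard_image_of_injective _ e.injective] using hWcard
  obtain ⟨M, c, hc, hi⟩ := hφ (n * (k + 1)) C' I' hpos' hres' hsize'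
  -- the parameters for ψ
  refine ⟨M, fun i p => c (e (i, p.1)) p.2, ?_, ?_⟩
  · -- consistency conditions
    intro p hp
    obtain ⟨a, ha, -⟩ := hc (e '' (p.1 ×ˢ Set.univ), ∅) ⟨p, hp, rfl⟩
    refine ⟨a, ?_, ?_⟩
    · intro i hi'
      simp only [Formula.Realize, realize_finsetIInf, Finset.mem_univ,
        forall_true_left]
      intro j
      have : φ.Realize (Sum.elim a (c (e (i, j)))) :=
        ha _ (Set.mem_image_of_mem _ (Set.mk_mem_prod hi' (Set.mem_univ j)))
      refine Formula.realize_relabel.2 ?_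
      convert this using 2
      funext x
      cases x <;> rfl
    · intro j hj
      rw [(hpos p (Set.mem_union_left _ hp)).2] at hj
      exact absurd hj (Set.notMem_empty _)
  · -- inconsistency conditions
    intro p hp
    obtain ⟨W, hWsub, hWfst, hWcard⟩ := hexW p hp
    rintro ⟨a, ha, -⟩
    refine hi (e '' W, ∅) ⟨p, hp, W, hWsub, hWfst, hWcard, rfl⟩ ⟨a, ?_, ?_⟩
    · rintro m ⟨w, hw, rfl⟩
      have hw1 : w.1 ∈ p.1 := (hWsub hw).1
      have := ha w.1 hw1
      simp only [Formula.Realize, realize_finsetIInf, Finset.mem_univ,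
        forall_true_left] at this
      have h2 := this w.2
      have h3 := Formula.realize_relabel.1 h2
      convert h3 using 2
      funext x
      cases x <;> rfl
    · intro j hj
      exact absurd hj (Set.notMem_empty _)
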